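/- Every total domination root of the graph H(3) (for any graph H of order n ≥ 1) lies in the set {-2, 0}. -/

import Mathlib

open Polynomial Finset

/-- `D` is a total dominating set of `G`: every vertex has a neighbor in `D`. -/
def isTDS {V : Type*} (G : SimpleGraph V) (D : Finset V) : Prop :=
  ∀ v : V, ∃ u ∈ D, G.Adj v u

/-- The total domination polynomial of `G` (with integer coefficients). -/
noncomputable def tdPoly {V : Type*} [Finite V] (G : SimpleGraph V) : Polynomial ℤ :=
  letI := Fintype.ofFinite V
  letI : DecidablePred (isTDS G) := Classical.decPred _
  ∑ D ∈ Finset.univ.filter (isTDS G), X ^ D.card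

/-- `tdCount G i` is the number of total dominating sets of `G` of cardinality `i`. -/
noncomputable def tdCount {V : Type*} [Finite V] (G : SimpleGraph V) (i : ℕ) : ℕ :=
  letI := Fintype.ofFinite V
  letI : DecidablePred (fun D : Finset V => D.card = i ∧ isTDS G D) := Classical.decPred _
  (Finset.univ.filter (fun D : Finset V => D.card = i ∧ isTDS G D)).card

/-- The total domination number of `G`. -/
noncomputable def tdNum {V : Type*} (G : SimpleGraph V) : ℕ :=
  sInf {k | ∃ D : Finset V, D.card = k ∧ isTDS G D}

/-- `attachP3 H` : to every vertex of `H` a path `P₃` is attached, identified at an end vertex.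
The first summand is the vertex set of `H`. -/
def attachP3 {V : Type*} (H : SimpleGraph V) : SimpleGraph (V ⊕ V ⊕ V) :=
  SimpleGraph.fromRel (fun a b =>
    (∃ u v, a = .inl u ∧ b = .inl v ∧ H.Adj u v) ∨
    (∃ v, a = .inl v ∧ b = .inr (.inl v)) ∨
    (∃ v, a = .inr (.inl v) ∧ b = .inr (.inr v)))

/-! ### Auxiliary machinery -/

set_option linter.unusedSectionVars false

section Aux
variable {V : Type*} [Fintype V] [DecidableEq V]

/-- Weight of a choice: whether the original vertex and/or the leaf is in the set. -/
def cnt (s : Bool × Bool) : ℕ := (cond s.1 1 0) + 1 + (cond s.2 1 0)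

/-- The allowed choices: at least one of the original vertex and the leaf. -/
def S3 : Finset (Bool × Bool) := {(true,true),(true,false),(false,true)}

/-- The total dominating set determined by a choice function. -/
def Dof (f : V → Bool × Bool) : Finset (V ⊕ V ⊕ V) :=
  univ.filter (fun x => Sum.elim (fun v => (f v).1)
    (Sum.elim (fun _ => true) (fun v => (f v).2)) x = true)

/-- The choice function determined by a set. -/
def fwd (D : Finset (V ⊕ V ⊕ V)) : V → Bool × Bool :=
  fun v => (decide (Sum.inl v ∈ D), decide (Sum.inr (Sum.inr v) ∈ D))

lemma mem_Dof (f : V → Bool × Bool) (x : V ⊕ V ⊕ V) :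
    x ∈ Dof f ↔ Sum.elim (fun v => (f v).1)
      (Sum.elim (fun _ => true) (fun v => (f v).2)) x = true := by
  simp [Dof]

lemma card_Dof (f : V → Bool × Bool) : (Dof f).card = ∑ v, cnt (f v) := by
  rw [Dof, Finset.card_filter]
  rw [Fintype.sum_sum_type, Fintype.sum_sum_type]
  simp only [Sum.elim_inl, Sum.elim_inr, cnt, Finset.sum_add_distrib]
  have h1 : ∀ v : V, (if (f v).1 = true then 1 else 0) = cond (f v).1 1 0 := by
    intro v; cases (f v).1 <;> simp
  have h2 : ∀ v : V, (if (f v).2 = true then 1 else 0) = cond (f v).2 1 0 := by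
    intro v; cases (f v).2 <;> simp
  simp only [h1, h2, if_true]
  rw [add_assoc]
  congr 1
  · exact Finset.sum_congr rfl (fun v _ => h1 v)
  · congr 1
    exact Finset.sum_congr rfl (fun v _ => h2 v)

lemma Dof_fwd (D : Finset (V ⊕ V ⊕ V)) (h1 : ∀ v, Sum.inr (Sum.inl v) ∈ D) :
    Dof (fwd D) = D := by
  ext x
  rcases x with v | v | v <;> simp [mem_Dof, fwd, h1]

lemma fwd_Dof (f : V → Bool × Bool) : fwd (Dof f) = f := by
  funext v
  have h1 : Sum.inl v ∈ Dof f ↔ (f v).1 = true := by simp [mem_Dof]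
  have h2 : Sum.inr (Sum.inr v) ∈ Dof f ↔ (f v).2 = true := by simp [mem_Dof]
  simp only [fwd]
  ext
  · simp [h1]
  · simp [h2]

lemma fwd_mem_pi (D : Finset (V ⊕ V ⊕ V))
    (h2 : ∀ v, Sum.inl v ∈ D ∨ Sum.inr (Sum.inr v) ∈ D) :
    fwd D ∈ Fintype.piFinset (fun _ : V => S3) := by
  rw [Fintype.mem_piFinset]
  intro v
  rcases h2 v with h | h <;>
  · simp only [S3, fwd, Finset.mem_insert, Finset.mem_singleton, Prod.mk.injEq]
    by_cases ha : Sum.inl v ∈ D <;> by_cases hb : Sum.inr (Sum.inr v) ∈ D <;>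
      simp_all

lemma Dof_props (f : V → Bool × Bool) (hf : f ∈ Fintype.piFinset (fun _ : V => S3)) :
    (∀ v, Sum.inr (Sum.inl v) ∈ Dof f) ∧
    (∀ v, Sum.inl v ∈ Dof f ∨ Sum.inr (Sum.inr v) ∈ Dof f) := by
  rw [Fintype.mem_piFinset] at hf
  refine ⟨fun v => by simp [mem_Dof], fun v => ?_⟩
  have := hf v
  simp only [S3, Finset.mem_insert, Finset.mem_singleton] at this
  rcases this with h | h | h <;> simp [mem_Dof, h]

lemma sum_S3 (r : ℂ) : ∑ s ∈ S3, r ^ cnt s = r ^ 2 * (r + 2) := by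
  simp [S3, cnt]
  ring

end Aux

/-- A set is a TDS of `attachP3 H` iff it contains all middle vertices and, for each `v`,
the original vertex or the leaf. -/
lemma isTDS_attachP3_iff {V : Type*} (H : SimpleGraph V) (D : Finset (V ⊕ V ⊕ V)) :
    isTDS (attachP3 H) D ↔
      (∀ v, Sum.inr (Sum.inl v) ∈ D) ∧ ∀ v, Sum.inl v ∈ D ∨ Sum.inr (Sum.inr v) ∈ D := by
  constructor
  · intro h
    constructor
    · intro v
      obtain ⟨u, hu, hadj⟩ := h (Sum.inr (Sum.inr v))
      have : u = Sum.inr (Sum.inl v) := by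
        simp only [attachP3, SimpleGraph.fromRel_adj] at hadj
        aesop
      subst this; exact hu
    · intro v
      obtain ⟨u, hu, hadj⟩ := h (Sum.inr (Sum.inl v))
      have : u = Sum.inl v ∨ u = Sum.inr (Sum.inr v) := by
        simp only [attachP3, SimpleGraph.fromRel_adj] at hadj
        aesop
      rcases this with h|h <;> subst h
      · exact Or.inl hu
      · exact Or.inr hu
  · rintro ⟨h1, h2⟩ x
    match x with
    | Sum.inl v => exact ⟨Sum.inr (Sum.inl v), h1 v, by simp [attachP3, SimpleGraph.fromRel_adj]⟩
    | Sum.inr (Sum.inl v) =>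
        rcases h2 v with h | h
        · exact ⟨Sum.inl v, h, by simp [attachP3, SimpleGraph.fromRel_adj]⟩
        · exact ⟨Sum.inr (Sum.inr v), h, by simp [attachP3, SimpleGraph.fromRel_adj]⟩
    | Sum.inr (Sum.inr v) => exact ⟨Sum.inr (Sum.inl v), h1 v, by simp [attachP3, SimpleGraph.fromRel_adj]⟩

lemma aeval_tdPoly {W : Type*} [Fintype W] (G : SimpleGraph W) (r : ℂ) :
    letI : DecidablePred (isTDS G) := Classical.decPred _
    aeval r (tdPoly G) = ∑ D ∈ Finset.univ.filter (isTDS G), r ^ D.card := by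
  letI : DecidablePred (isTDS G) := Classical.decPred _
  have h : tdPoly G = ∑ D ∈ Finset.univ.filter (isTDS G), (X : ℤ[X]) ^ D.card := by
    rw [tdPoly]; congr!
  rw [h, map_sum]
  simp [map_pow]

/-- Evaluation of the total domination polynomial of `attachP3 H`:
it equals `(r² (r+2))ⁿ`. -/
lemma aeval_tdPoly_attachP3 {V : Type*} [Fintype V] (H : SimpleGraph V) (r : ℂ) :
    aeval r (tdPoly (attachP3 H)) = (r ^ 2 * (r + 2)) ^ (Fintype.card V) := by
  classical
  rw [aeval_tdPoly]
  have hbij : ∑ D ∈ Finset.univ.filter (isTDS (attachP3 H)), r ^ D.card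
      = ∑ f ∈ Fintype.piFinset (fun _ : V => S3), ∏ v, r ^ cnt (f v) := by
    refine Finset.sum_nbij' fwd Dof ?_ ?_ ?_ ?_ ?_
    · intro D hD
      rw [Finset.mem_filter, isTDS_attachP3_iff] at hD
      exact fwd_mem_pi D hD.2.2
    · intro f hf
      rw [Finset.mem_filter, isTDS_attachP3_iff]
      exact ⟨Finset.mem_univ _, Dof_props f hf⟩
    · intro D hD
      rw [Finset.mem_filter, isTDS_attachP3_iff] at hD
      exact Dof_fwd D hD.2.1
    · intro f _
      exact fwd_Dof f
    · intro D hD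
      rw [Finset.mem_filter, isTDS_attachP3_iff] at hD
      conv_lhs => rw [← Dof_fwd D hD.2.1]
      rw [card_Dof, ← Finset.prod_pow_eq_pow_sum]
  have hps := Finset.prod_univ_sum (κ := fun _ : V => Bool × Bool)
    (t := fun _ => S3) (f := fun _ s => r ^ cnt s)
  rw [hbij, ← hps]
  simp [sum_S3]

theorem tdRoots_attachP3 {V : Type*} [Fintype V] (H : SimpleGraph V)
    (hn : 1 ≤ Fintype.card V) (r : ℂ)
    (h : Polynomial.aeval r (tdPoly (attachP3 H)) = 0) :
    r = -2 ∨ r = 0 := by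
  rw [aeval_tdPoly_attachP3] at h
  have := pow_eq_zero_iff (n := Fintype.card V) (by omega) |>.mp h
  rcases mul_eq_zero.mp this with h' | h'
  · right; exact pow_eq_zero_iff (by norm_num) |>.mp h'
  · left; linear_combination h'
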